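/- arXiv:1101.5767 — 2 statements merged into one kernel-verified Lean document; each statement's English description precedes it below -/
import Mathlib

section
/- Let x, x′ ∈ ℚ^{2(g+1)} be linearly independent vectors, each with a_1-coordinate equal to 1, with pr₂(x) ≠ 0, and let u ∈ H₂ satisfy ω(x,u) = ω(x′,u) = 1. Then the orthogonal complement {z ∈ ℚ^{2(g+1)} : ω(z,x) = ω(z,x′) = ω(z,b_1) = 0} is the internal direct sum of the subspace {z ∈ H₂ : ω(z,pr₂(x)) = ω(z,pr₂(x′)) = 0} and the line ℚ·(b_1 − u). -/
namespace Paper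

/-- The standard symplectic form on `R^{2g}` with respect to the basis
`a_1, b_1, …, a_g, b_g` (coordinates `2i, 2i+1` for `a_{i+1}, b_{i+1}`). -/
def symp {R : Type*} [CommRing R] {g : ℕ} (x y : Fin (2 * g) → R) : R :=
  ∑ i : Fin g,
    (x ⟨2 * i.1, by omega⟩ * y ⟨2 * i.1 + 1, by omega⟩ -
      x ⟨2 * i.1 + 1, by omega⟩ * y ⟨2 * i.1, by omega⟩)

theorem symp_add_left {R : Type*} [CommRing R] {g : ℕ} (x y a : Fin (2 * g) → R) :
    symp (x + y) a = symp x a + symp y a := by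
  unfold symp
  rw [← Finset.sum_add_distrib]
  exact Finset.sum_congr rfl fun i _ => by simp only [Pi.add_apply]; ring

theorem symp_smul_left {R : Type*} [CommRing R] {g : ℕ} (c : R) (x a : Fin (2 * g) → R) :
    symp (c • x) a = c * symp x a := by
  unfold symp
  rw [Finset.mul_sum]
  exact Finset.sum_congr rfl fun i _ => by simp only [Pi.smul_apply, smul_eq_mul]; ring

theorem symp_zero_left {R : Type*} [CommRing R] {g : ℕ} (a : Fin (2 * g) → R) :
    symp (0 : Fin (2 * g) → R) a = 0 := by
  unfold symp; simp

/-- The orthogonal complement `A^⊥ = {x | ω(x,a) = 0 for all a ∈ A}`. -/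
def perp {R : Type*} [CommRing R] {g : ℕ} (A : Set (Fin (2 * g) → R)) :
    Submodule R (Fin (2 * g) → R) where
  carrier := {x | ∀ a ∈ A, symp x a = 0}
  add_mem' := by
    intro x y hx hy a ha
    rw [symp_add_left, hx a ha, hy a ha, add_zero]
  zero_mem' := by
    intro a ha
    exact symp_zero_left a
  smul_mem' := by
    intro c x hx a ha
    rw [symp_smul_left, hx a ha, mul_zero]

/-- The submodule of vectors whose first `m` coordinates vanish.
`H_k = coordZero R (2*g) (2*(k-1))`, and `H₂ = coordZero R (2*(g+1)) 2`. -/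
def coordZero (R : Type*) [CommRing R] (n m : ℕ) : Submodule R (Fin n → R) where
  carrier := {v | ∀ j : Fin n, (j : ℕ) < m → v j = 0}
  add_mem' := by
    intro x y hx hy j hj
    have h1 := hx j hj
    have h2 := hy j hj
    simp [Pi.add_apply, h1, h2]
  zero_mem' := by intro j hj; rfl
  smul_mem' := by
    intro c x hx j hj
    have h1 := hx j hj
    simp [Pi.smul_apply, h1]

/-- The standard basis vector `a_{i+1}` (`i` is 0-indexed). -/
def stdA (R : Type*) [CommRing R] (g i : ℕ) : Fin (2 * g) → R :=
  fun j => if (j : ℕ) = 2 * i then 1 else 0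

/-- The standard basis vector `b_{i+1}` (`i` is 0-indexed). -/
def stdB (R : Type*) [CommRing R] (g i : ℕ) : Fin (2 * g) → R :=
  fun j => if (j : ℕ) = 2 * i + 1 then 1 else 0

/-- Regard an integer vector as a rational vector. -/
def qcast {n : ℕ} (v : Fin n → ℤ) : Fin n → ℚ := fun j => (v j : ℚ)

/-- The projection `pr₂` deleting the `a_1`- and `b_1`-coordinates. -/
def pr2 {R : Type*} [CommRing R] {n : ℕ} (v : Fin n → R) : Fin n → R :=
  fun j => if (j : ℕ) < 2 then 0 else v j

/-- `gcd(v_1, …, v_m) = 1`: the vectors are linearly independent and their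
ℤ-span is a direct summand. -/
def IsUnimodular {n m : ℕ} (v : Fin m → Fin n → ℤ) : Prop :=
  LinearIndependent ℤ v ∧
    ∃ C : Submodule ℤ (Fin n → ℤ), IsCompl (Submodule.span ℤ (Set.range v)) C

/-- A primitive vector. -/
def Primitive {n : ℕ} (v : Fin n → ℤ) : Prop := IsUnimodular ![v]

/-- The entries of `w` are pairwise `ω`-orthogonal. -/
def PairwiseOrth {g m : ℕ} (w : Fin m → Fin (2 * g) → ℤ) : Prop :=
  ∀ i j, i ≠ j → symp (w i) (w j) = 0

/-- `Λ³ W`: the span of all wedges of three vectors from `W` inside the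
exterior algebra. -/
def wedge3 {g : ℕ} (W : Submodule ℚ (Fin (2 * g) → ℚ)) :
    Submodule ℚ (ExteriorAlgebra ℚ (Fin (2 * g) → ℚ)) :=
  Submodule.span ℚ {x | ∃ z₁ ∈ W, ∃ z₂ ∈ W, ∃ z₃ ∈ W,
    x = ExteriorAlgebra.ι ℚ z₁ * ExteriorAlgebra.ι ℚ z₂ * ExteriorAlgebra.ι ℚ z₃}

/-- `u ∧ Λ² W`. -/
def uWedge2 {g : ℕ} (u : Fin (2 * g) → ℚ) (W : Submodule ℚ (Fin (2 * g) → ℚ)) :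
    Submodule ℚ (ExteriorAlgebra ℚ (Fin (2 * g) → ℚ)) :=
  Submodule.span ℚ {x | ∃ z₁ ∈ W, ∃ z₂ ∈ W,
    x = ExteriorAlgebra.ι ℚ u * ExteriorAlgebra.ι ℚ z₁ * ExteriorAlgebra.ι ℚ z₂}

/-- `u ∧ u' ∧ W`. -/
def uuWedge1 {g : ℕ} (u u' : Fin (2 * g) → ℚ) (W : Submodule ℚ (Fin (2 * g) → ℚ)) :
    Submodule ℚ (ExteriorAlgebra ℚ (Fin (2 * g) → ℚ)) :=
  Submodule.span ℚ {x | ∃ z ∈ W,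
    x = ExteriorAlgebra.ι ℚ u * ExteriorAlgebra.ι ℚ u' * ExteriorAlgebra.ι ℚ z}

/-- The simplicial differential: on the summand indexed by `w` it sends `z` to
`Σ_j (-1)^j · z` placed in the summand indexed by `∂_j w`. -/
noncomputable def diff (g p : ℕ)
    (ξ : (Fin (p + 1) → Fin (2 * g) → ℤ) →₀ ExteriorAlgebra ℚ (Fin (2 * g) → ℚ)) :
    (Fin p → Fin (2 * g) → ℤ) →₀ ExteriorAlgebra ℚ (Fin (2 * g) → ℚ) :=
  ξ.sum fun w z =>
    ∑ j : Fin (p + 1), ((-1 : ℚ) ^ (j : ℕ)) • Finsupp.single (fun i => w (j.succAbove i)) z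

/-- The gcd of the determinants of all maximal square submatrices of the matrix
whose columns are the `v i`. -/
def vgcd {ι : Type*} [Fintype ι] {m : ℕ} (v : Fin m → ι → ℤ) : ℕ :=
  Finset.univ.gcd fun r : Fin m → ι => (Matrix.det (Matrix.of fun i j => v j (r i))).natAbs

theorem symp_neg_left {R : Type*} [CommRing R] {g : ℕ} (x a : Fin (2 * g) → R) :
    symp (-x) a = - symp x a := by
  have h := symp_smul_left (-1 : R) x a
  simpa using h

theorem symp_sub_left {R : Type*} [CommRing R] {g : ℕ} (x y a : Fin (2 * g) → R) :
    symp (x - y) a = symp x a - symp y a := by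
  rw [sub_eq_add_neg, symp_add_left, symp_neg_left, sub_eq_add_neg]

theorem symp_antisymm {R : Type*} [CommRing R] {g : ℕ} (x y : Fin (2 * g) → R) :
    symp x y = - symp y x := by
  unfold symp
  rw [← Finset.sum_neg_distrib]
  exact Finset.sum_congr rfl fun i _ => by ring

theorem symp_stdB0 {R : Type*} [CommRing R] {g : ℕ} (z : Fin (2 * (g + 1)) → R) :
    symp z (stdB R (g + 1) 0) = z ⟨0, Nat.mul_pos (by norm_num) (Nat.succ_pos g)⟩ := by
  unfold symp stdB
  rw [Finset.sum_eq_single (0 : Fin (g + 1))]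
  · simp
  · intro i _ hi
    have hne : i.1 ≠ 0 := fun h => hi (Fin.ext h)
    rw [if_neg ?c1, if_neg ?c2]
    · ring
    case c1 => show ¬(2 * i.1 + 1 = 2 * 0 + 1); omega
    case c2 => show ¬(2 * i.1 = 2 * 0 + 1); omega
  · simp

theorem symp_pr2_right {R : Type*} [CommRing R] {g : ℕ} (z v : Fin (2 * (g + 1)) → R)
    (h0 : z ⟨0, Nat.mul_pos (by norm_num) (Nat.succ_pos g)⟩ = 0) (h1 : z ⟨1, by omega⟩ = 0) :
    symp z (pr2 v) = symp z v := by
  unfold symp pr2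
  refine Finset.sum_congr rfl fun i _ => ?_
  rcases Nat.eq_zero_or_pos i.1 with hi | hi
  · simp only [hi, Nat.mul_zero, Nat.zero_add]
    rw [h0, h1]
    ring
  · rw [if_neg ?c1, if_neg ?c2]
    case c1 => show ¬(2 * i.1 + 1 < 2); omega
    case c2 => show ¬(2 * i.1 < 2); omega

theorem mem_perp_iff {R : Type*} [CommRing R] {g : ℕ} {A : Set (Fin (2 * g) → R)}
    {z : Fin (2 * g) → R} : z ∈ perp A ↔ ∀ a ∈ A, symp z a = 0 := Iff.rfl

theorem mem_coordZero_iff {R : Type*} [CommRing R] {n m : ℕ} {v : Fin n → R} :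
    v ∈ coordZero R n m ↔ ∀ j : Fin n, (j : ℕ) < m → v j = 0 := Iff.rfl

/-- the decomposition `⟨x,x',b_1⟩^⊥ = pr₂(⟨pr₂x,pr₂x'⟩^⊥ ∩ H₂) ⊕ ℚ(b_1 - u)`. -/
theorem stmt17 (g : ℕ) (x x' : Fin (2 * (g + 1)) → ℚ)
    (hli : LinearIndependent ℚ ![x, x'])
    (hxa : x ⟨0, by omega⟩ = 1) (hx'a : x' ⟨0, by omega⟩ = 1)
    (hpr : pr2 x ≠ 0)
    (u : Fin (2 * (g + 1)) → ℚ) (hu : u ∈ coordZero ℚ (2 * (g + 1)) 2)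
    (hux : symp x u = 1) (hux' : symp x' u = 1) :
    perp {x, x', stdB ℚ (g + 1) 0} =
      (perp {pr2 x, pr2 x'} ⊓ coordZero ℚ (2 * (g + 1)) 2) ⊔
        Submodule.span ℚ {stdB ℚ (g + 1) 0 - u} ∧
    Disjoint (perp {pr2 x, pr2 x'} ⊓ coordZero ℚ (2 * (g + 1)) 2)
      (Submodule.span ℚ {stdB ℚ (g + 1) 0 - u}) := by
  have hu0 : u ⟨0, by omega⟩ = 0 := mem_coordZero_iff.mp hu ⟨0, by omega⟩ (by norm_num)
  have hu1 : u ⟨1, by omega⟩ = 0 := mem_coordZero_iff.mp hu ⟨1, by omega⟩ (by norm_num)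
  have hb0 : stdB ℚ (g + 1) 0 ⟨0, by omega⟩ = (0 : ℚ) := rfl
  have hb1 : stdB ℚ (g + 1) 0 ⟨1, by omega⟩ = (1 : ℚ) := rfl
  have hv0 : (stdB ℚ (g + 1) 0 - u) ⟨0, by omega⟩ = 0 := by
    simp only [Pi.sub_apply, hb0, hu0, sub_zero]
  have hv1 : (stdB ℚ (g + 1) 0 - u) ⟨1, by omega⟩ = 1 := by
    simp only [Pi.sub_apply, hb1, hu1, sub_zero]
  have hvx : symp (stdB ℚ (g + 1) 0 - u) x = 0 := by
    rw [symp_sub_left, symp_antisymm (stdB ℚ (g + 1) 0) x, symp_stdB0, hxa,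
      symp_antisymm u x, hux]
    ring
  have hvx' : symp (stdB ℚ (g + 1) 0 - u) x' = 0 := by
    rw [symp_sub_left, symp_antisymm (stdB ℚ (g + 1) 0) x', symp_stdB0, hx'a,
      symp_antisymm u x', hux']
    ring
  have hvb : symp (stdB ℚ (g + 1) 0 - u) (stdB ℚ (g + 1) 0) = 0 := by
    rw [symp_stdB0]; exact hv0
  have hvperp : (stdB ℚ (g + 1) 0 - u) ∈ perp {x, x', stdB ℚ (g + 1) 0} := by
    rw [mem_perp_iff]
    intro a ha
    simp only [Set.mem_insert_iff, Set.mem_singleton_iff] at ha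
    rcases ha with rfl | rfl | rfl
    · exact hvx
    · exact hvx'
    · exact hvb
  constructor
  · apply le_antisymm
    · intro z hz
      rw [mem_perp_iff] at hz
      have h1 : symp z x = 0 := hz x (by simp)
      have h2 : symp z x' = 0 := hz x' (by simp)
      have h3 : symp z (stdB ℚ (g + 1) 0) = 0 := hz _ (by simp)
      have hz0 : z ⟨0, by omega⟩ = 0 := by rw [← symp_stdB0 z]; exact h3
      set c : ℚ := z ⟨1, by omega⟩ with hc
      set w : Fin (2 * (g + 1)) → ℚ := z - c • (stdB ℚ (g + 1) 0 - u) with hw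
      have hw0 : w ⟨0, by omega⟩ = 0 := by
        simp only [hw, Pi.sub_apply, Pi.smul_apply, smul_eq_mul, hz0, hv0]
        ring
      have hw1 : w ⟨1, by omega⟩ = 0 := by
        simp only [hw, Pi.sub_apply, Pi.smul_apply, smul_eq_mul, hv1, ← hc]
        ring
      have hwH : w ∈ coordZero ℚ (2 * (g + 1)) 2 := by
        rw [mem_coordZero_iff]
        intro j hj
        have h01 : (j : ℕ) = 0 ∨ (j : ℕ) = 1 := by omega
        rcases h01 with h | h
        · rw [show j = ⟨0, by omega⟩ from Fin.ext h]; exact hw0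
        · rw [show j = ⟨1, by omega⟩ from Fin.ext h]; exact hw1
      have hwx : symp w x = 0 := by
        rw [hw, symp_sub_left, symp_smul_left, h1, hvx]; ring
      have hwx' : symp w x' = 0 := by
        rw [hw, symp_sub_left, symp_smul_left, h2, hvx']; ring
      have hwpx : symp w (pr2 x) = 0 := by rw [symp_pr2_right w x hw0 hw1]; exact hwx
      have hwpx' : symp w (pr2 x') = 0 := by rw [symp_pr2_right w x' hw0 hw1]; exact hwx'
      refine Submodule.mem_sup.mpr ⟨w, Submodule.mem_inf.mpr ⟨?_, hwH⟩,
        c • (stdB ℚ (g + 1) 0 - u),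
        Submodule.smul_mem _ c (Submodule.mem_span_singleton_self _), ?_⟩
      · rw [mem_perp_iff]
        intro a ha
        simp only [Set.mem_insert_iff, Set.mem_singleton_iff] at ha
        rcases ha with rfl | rfl
        · exact hwpx
        · exact hwpx'
      · rw [hw]; abel
    · apply sup_le
      · intro w hw
        obtain ⟨hwp, hwH⟩ := Submodule.mem_inf.mp hw
        rw [mem_perp_iff] at hwp ⊢
        have hw0 : w ⟨0, by omega⟩ = 0 := mem_coordZero_iff.mp hwH ⟨0, by omega⟩ (by norm_num)
        have hw1 : w ⟨1, by omega⟩ = 0 := mem_coordZero_iff.mp hwH ⟨1, by omega⟩ (by norm_num)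
        intro a ha
        simp only [Set.mem_insert_iff, Set.mem_singleton_iff] at ha
        rcases ha with ha | ha | ha
        · rw [ha, ← symp_pr2_right w x hw0 hw1]; exact hwp (pr2 x) (by simp)
        · rw [ha, ← symp_pr2_right w x' hw0 hw1]; exact hwp (pr2 x') (by simp)
        · rw [ha, symp_stdB0]; exact hw0
      · rw [Submodule.span_le, Set.singleton_subset_iff]
        exact hvperp
  · rw [Submodule.disjoint_def]
    intro z hz1 hz2
    obtain ⟨c, rfl⟩ := Submodule.mem_span_singleton.mp hz2
    obtain ⟨_, hzH⟩ := Submodule.mem_inf.mp hz1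
    have h1 : (c • (stdB ℚ (g + 1) 0 - u)) ⟨1, by omega⟩ = 0 :=
      mem_coordZero_iff.mp hzH ⟨1, by omega⟩ (by norm_num)
    simp only [Pi.smul_apply, smul_eq_mul, hv1, mul_one] at h1
    rw [h1, zero_smul]


end Paper
end

section
/- For any vectors v_1, …, v_m, w_1, …, w_n ∈ ℤ^N, the product gcd(v_1,…,v_m) · gcd(w_1,…,w_n) divides gcd(v_1,…,v_m,w_1,…,w_n), with the convention that every natural number divides 0. -/
namespace Paper

section Stmt19Aux

open Equiv Finset

variable {m n : ℕ}

/-- For a subset `S` of `Fin (m+n)` of size `m`, the canonical identification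
`Fin m ⊕ Fin n ≃ Fin (m+n)` sending the left summand (monotonically) onto `S`
and the right summand onto `Sᶜ`. -/
private def splitEquiv (S : Finset (Fin (m + n))) (hS : S.card = m) :
    (Fin m ⊕ Fin n) ≃ Fin (m + n) :=
  (Equiv.sumCongr (S.orderIsoOfFin hS).toEquiv
      ((Sᶜ).orderIsoOfFin
        (by rw [Finset.card_compl, hS, Fintype.card_fin]; omega)).toEquiv).trans
    ((Equiv.sumCongr (Equiv.refl _)
        (Equiv.subtypeEquivRight fun x => Finset.mem_compl)).trans
      (Equiv.sumCompl (· ∈ S)))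

private lemma splitEquiv_inl (S : Finset (Fin (m + n))) (hS : S.card = m) (a : Fin m) :
    splitEquiv S hS (Sum.inl a) = ↑(S.orderIsoOfFin hS a) := rfl

private lemma splitEquiv_inl_mem (S : Finset (Fin (m + n))) (hS : S.card = m) (a : Fin m) :
    splitEquiv S hS (Sum.inl a) ∈ S := by
  rw [splitEquiv_inl]; exact (S.orderIsoOfFin hS a).2

/-- The index type for the Laplace-expansion decomposition of permutations. -/
private abbrev LapIdx (m n : ℕ) : Type :=
  {S : Finset (Fin (m + n)) // S.card = m} × (Perm (Fin m) × Perm (Fin n))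

/-- The permutation associated to a triple `(S, σ, τ)`. -/
private def lapPerm (p : LapIdx m n) : Perm (Fin (m + n)) :=
  finSumFinEquiv.symm.trans ((Equiv.sumCongr p.2.1 p.2.2).trans (splitEquiv p.1.1 p.1.2))

private lemma lapPerm_apply_left (p : LapIdx m n) (a : Fin m) :
    lapPerm p (finSumFinEquiv (Sum.inl a)) = splitEquiv p.1.1 p.1.2 (Sum.inl (p.2.1 a)) := by
  simp [lapPerm]

private lemma lapPerm_apply_right (p : LapIdx m n) (b : Fin n) :
    lapPerm p (finSumFinEquiv (Sum.inr b)) = splitEquiv p.1.1 p.1.2 (Sum.inr (p.2.2 b)) := by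
  simp [lapPerm]

private lemma lapPerm_injective : Function.Injective (lapPerm (m := m) (n := n)) := by
  rintro ⟨⟨S, hS⟩, σ, τ⟩ ⟨⟨S', hS'⟩, σ', τ'⟩ h
  have happ : ∀ x, lapPerm (⟨⟨S, hS⟩, σ, τ⟩ : LapIdx m n) x
      = lapPerm (⟨⟨S', hS'⟩, σ', τ'⟩ : LapIdx m n) x := fun x => by rw [h]
  have hl : ∀ a : Fin m,
      splitEquiv S hS (Sum.inl (σ a)) = splitEquiv S' hS' (Sum.inl (σ' a)) := by
    intro a
    have h1 := lapPerm_apply_left (⟨⟨S, hS⟩, σ, τ⟩ : LapIdx m n) a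
    have h2 := lapPerm_apply_left (⟨⟨S', hS'⟩, σ', τ'⟩ : LapIdx m n) a
    rw [← h1, ← h2]; exact happ _
  have hr : ∀ b : Fin n,
      splitEquiv S hS (Sum.inr (τ b)) = splitEquiv S' hS' (Sum.inr (τ' b)) := by
    intro b
    have h1 := lapPerm_apply_right (⟨⟨S, hS⟩, σ, τ⟩ : LapIdx m n) b
    have h2 := lapPerm_apply_right (⟨⟨S', hS'⟩, σ', τ'⟩ : LapIdx m n) b
    rw [← h1, ← h2]; exact happ _
  have hsub : S ⊆ S' := by
    intro x hx
    have hx' : splitEquiv S hS (Sum.inl ((S.orderIsoOfFin hS).symm ⟨x, hx⟩)) = x := by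
      rw [splitEquiv_inl, OrderIso.apply_symm_apply]
    have := hl (σ⁻¹ ((S.orderIsoOfFin hS).symm ⟨x, hx⟩))
    rw [Equiv.Perm.inv_def, Equiv.apply_symm_apply, hx'] at this
    rw [this]; exact splitEquiv_inl_mem S' hS' _
  have hSS : S = S' := Finset.eq_of_subset_of_card_le hsub (by rw [hS, hS'])
  subst hSS
  have hσ : σ = σ' := Equiv.ext fun a => by simpa using (splitEquiv S hS).injective (hl a)
  have hτ : τ = τ' := Equiv.ext fun b => by simpa using (splitEquiv S hS).injective (hr b)
  simp [hσ, hτ]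

private lemma lapPerm_bijective : Function.Bijective (lapPerm (m := m) (n := n)) := by
  rw [Fintype.bijective_iff_injective_and_card]
  refine ⟨lapPerm_injective, ?_⟩
  have : Fintype.card (LapIdx m n)
      = (m + n).choose m * (Nat.factorial m * Nat.factorial n) := by
    unfold LapIdx
    rw [Fintype.card_prod, Fintype.card_prod, Fintype.card_perm, Fintype.card_perm,
      Fintype.card_finset_len, Fintype.card_fin, Fintype.card_fin, Fintype.card_fin]
  rw [this, Fintype.card_perm, Fintype.card_fin]
  have h := Nat.choose_mul_factorial_mul_factorial (Nat.le_add_right m n)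
  have hmn : m + n - m = n := by omega
  rw [hmn] at h
  rw [← h]; ring

private lemma lapPerm_mul (p : LapIdx m n) :
    lapPerm p = lapPerm (⟨p.1, 1, 1⟩ : LapIdx m n)
      * finSumFinEquiv.permCongr (Equiv.sumCongr p.2.1 p.2.2) := by
  ext x
  simp [lapPerm, Equiv.Perm.mul_apply, Equiv.permCongr_apply]

private lemma lapPerm_sign (p : LapIdx m n) :
    Equiv.Perm.sign (lapPerm p)
      = Equiv.Perm.sign (lapPerm (⟨p.1, 1, 1⟩ : LapIdx m n))
        * (Equiv.Perm.sign p.2.1 * Equiv.Perm.sign p.2.2) := by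
  rw [lapPerm_mul p, map_mul, Equiv.Perm.sign_permCongr, Equiv.Perm.sign_sumCongr]

private lemma stmt19_aux (N m n : ℕ) (v : Fin m → Fin N → ℤ) (w : Fin n → Fin N → ℤ)
    (r : Fin (m + n) → Fin N) :
    ((vgcd v * vgcd w : ℕ) : ℤ) ∣
      Matrix.det (Matrix.of fun i j => Fin.append v w j (r i)) := by
  classical
  set A : Matrix (Fin (m + n)) (Fin (m + n)) ℤ :=
    Matrix.of fun i j => Fin.append v w j (r i) with hA
  -- the v-minor and w-minor associated to a subset S
  set Mv : {S : Finset (Fin (m + n)) // S.card = m} → Matrix (Fin m) (Fin m) ℤ :=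
    fun S => Matrix.of fun i j => v j (r (splitEquiv S.1 S.2 (Sum.inl i))) with hMv
  set Mw : {S : Finset (Fin (m + n)) // S.card = m} → Matrix (Fin n) (Fin n) ℤ :=
    fun S => Matrix.of fun i j => w j (r (splitEquiv S.1 S.2 (Sum.inr i))) with hMw
  have hprod : ∀ p : LapIdx m n,
      (∏ i, A (lapPerm p i) i)
        = (∏ a, (Mv p.1) (p.2.1 a) a) * (∏ b, (Mw p.1) (p.2.2 b) b) := by
    intro p
    rw [← Equiv.prod_comp finSumFinEquiv (fun i => A (lapPerm p i) i),
      Fintype.prod_sum_type]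
    congr 1
    · refine Finset.prod_congr rfl fun a _ => ?_
      rw [lapPerm_apply_left]
      simp only [hA, hMv, Matrix.of_apply, finSumFinEquiv_apply_left, Fin.append_left]
    · refine Finset.prod_congr rfl fun b _ => ?_
      rw [lapPerm_apply_right]
      simp only [hA, hMw, Matrix.of_apply, finSumFinEquiv_apply_right, Fin.append_right]
  have hdet : A.det = ∑ S : {S : Finset (Fin (m + n)) // S.card = m},
      Equiv.Perm.sign (lapPerm (⟨S, 1, 1⟩ : LapIdx m n)) • ((Mv S).det * (Mw S).det) := by
    rw [Matrix.det_apply]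
    rw [← Fintype.sum_bijective lapPerm lapPerm_bijective
      (fun p => Equiv.Perm.sign (lapPerm p) • ∏ i, A (lapPerm p i) i)
      (fun π => Equiv.Perm.sign π • ∏ i, A (π i) i) (fun p => rfl)]
    rw [Fintype.sum_prod_type]
    refine Finset.sum_congr rfl fun S _ => ?_
    rw [Fintype.sum_prod_type]
    rw [Matrix.det_apply, Matrix.det_apply, Finset.sum_mul_sum, Finset.smul_sum]
    refine Finset.sum_congr rfl fun σ _ => ?_
    rw [Finset.smul_sum]
    refine Finset.sum_congr rfl fun τ _ => ?_
    rw [hprod ⟨S, σ, τ⟩, lapPerm_sign ⟨S, σ, τ⟩]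
    simp only [Units.smul_def, Units.val_mul, smul_eq_mul]
    ring
  rw [hdet]
  refine Finset.dvd_sum fun S _ => ?_
  have hv : ((vgcd v : ℕ) : ℤ) ∣ (Mv S).det := by
    have h1 : vgcd v ∣ ((Mv S).det).natAbs :=
      Finset.gcd_dvd (Finset.mem_univ fun i => r (splitEquiv S.1 S.2 (Sum.inl i)))
    exact dvd_trans (Int.natCast_dvd_natCast.mpr h1) (Int.natAbs_dvd.mpr dvd_rfl)
  have hw : ((vgcd w : ℕ) : ℤ) ∣ (Mw S).det := by
    have h1 : vgcd w ∣ ((Mw S).det).natAbs :=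
      Finset.gcd_dvd (Finset.mem_univ fun i => r (splitEquiv S.1 S.2 (Sum.inr i)))
    exact dvd_trans (Int.natCast_dvd_natCast.mpr h1) (Int.natAbs_dvd.mpr dvd_rfl)
  have := mul_dvd_mul hv hw
  rw [← Nat.cast_mul] at this
  rw [Units.smul_def]
  exact Dvd.dvd.mul_left this _

end Stmt19Aux

/-- `gcd(v) · gcd(w)` divides `gcd(v, w)`. -/
theorem stmt19 (N m n : ℕ) (v : Fin m → Fin N → ℤ) (w : Fin n → Fin N → ℤ) :
    vgcd v * vgcd w ∣ vgcd (Fin.append v w) := by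
  refine Finset.dvd_gcd fun r _ => ?_
  have h := stmt19_aux N m n v w r
  have h2 := Int.natAbs_dvd_natAbs.mpr h
  rwa [Int.natAbs_natCast] at h2

end Paper
end
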